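/- Let T be a measurable space, ξ^1, …, ξ^K i.i.d. T-valued random variables (K ≥ 1), Π a finite nonempty index set, H > 0, and g : Π × T → [0, H] measurable. Define v(π) := E[g(π, ξ^1)] and the empirical values v̂(π) := (1/K) ∑_{l=1}^{K} g(π, ξ^l). Let π̂ be a measurable Π-valued random element with v̂(π̂(ω))(ω) = max_{π ∈ Π} v̂(π)(ω) for every ω. Then E[max_{π ∈ Π} v(π) − v(π̂)] ≤ √(H² log|Π| / K). -/

import Mathlib

open MeasureTheory ProbabilityTheory

/-- Core of Hoeffding's lemma: the Bernoulli mgf bound. -/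
lemma hoeff_core {r h : ℝ} (hr0 : 0 ≤ r) (hr1 : r ≤ 1) (hh : 0 ≤ h) :
    1 - r + r * Real.exp h ≤ Real.exp (r * h + h ^ 2 / 8) := by
  set q : ℝ → ℝ := fun x => 1 - r + r * Real.exp x with hq
  have hqpos : ∀ x, 0 < q x := by
    intro x
    rcases lt_or_eq_of_le hr1 with h1 | h1
    · have : 0 ≤ r * Real.exp x := mul_nonneg hr0 (Real.exp_pos x).le
      simp only [hq]; linarith
    · simp [hq, h1, Real.exp_pos x]
  set F : ℝ → ℝ := fun x => r * x + x ^ 2 / 8 - Real.log (q x) with hF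
  set F' : ℝ → ℝ := fun x => r + x / 4 - r * Real.exp x / q x with hF'
  have hdq : ∀ x, HasDerivAt q (r * Real.exp x) x := by
    intro x
    exact ((Real.hasDerivAt_exp x).const_mul r).const_add (1 - r)
  have hd1 : ∀ x, HasDerivAt F (F' x) x := by
    intro x
    have h1 : HasDerivAt (fun y : ℝ => r * y + y ^ 2 / 8) (r + 2 * x / 8) x := by
      exact (((hasDerivAt_id x).const_mul r).add
        (((hasDerivAt_pow 2 x)).div_const 8)).congr_deriv (by norm_num)
    have h2 : HasDerivAt (fun y => Real.log (q y)) (r * Real.exp x / q x) x :=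
      (hdq x).log (hqpos x).ne'
    have := h1.sub h2
    exact this.congr_deriv (by simp only [hF']; ring)
  have hd2 : ∀ x, HasDerivAt F' (1 / 4 - r * Real.exp x * (1 - r) / (q x) ^ 2) x := by
    intro x
    have h1 : HasDerivAt (fun y : ℝ => r + y / 4) (1 / 4) x := by
      simpa using ((hasDerivAt_id x).div_const 4).const_add r
    have h2 : HasDerivAt (fun y => r * Real.exp y / q y)
        ((r * Real.exp x * q x - r * Real.exp x * (r * Real.exp x)) / (q x) ^ 2) x :=
      ((Real.hasDerivAt_exp x).const_mul r).div (hdq x) (hqpos x).ne'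
    have := h1.sub h2
    refine this.congr_deriv ?_
    have hqe : q x - r * Real.exp x = 1 - r := by simp [hq]
    have : r * Real.exp x * q x - r * Real.exp x * (r * Real.exp x)
        = r * Real.exp x * (1 - r) := by linear_combination (r * Real.exp x) * hqe
    rw [this]
  have hF'' : ∀ x, 0 ≤ 1 / 4 - r * Real.exp x * (1 - r) / (q x) ^ 2 := by
    intro x
    have hq2 : (0:ℝ) < (q x) ^ 2 := pow_pos (hqpos x) 2
    rw [sub_nonneg, div_le_iff₀ hq2]
    have hqx : q x = 1 - r + r * Real.exp x := rfl
    nlinarith [sq_nonneg ((1 - r) - r * Real.exp x)]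
  have hdiffF' : Differentiable ℝ F' := fun x => (hd2 x).differentiableAt
  have hmono' : Monotone F' :=
    monotone_of_deriv_nonneg hdiffF'
      (fun x => by rw [(hd2 x).deriv]; exact hF'' x)
  have hF'0 : F' 0 = 0 := by
    simp only [hF']
    norm_num [hq]
  have hF'nonneg : ∀ x, 0 ≤ x → 0 ≤ F' x := fun x hx => hF'0 ▸ hmono' hx
  have hdiffF : Differentiable ℝ F := fun x => (hd1 x).differentiableAt
  have hFmono : MonotoneOn F (Set.Ici (0:ℝ)) :=
    monotoneOn_of_deriv_nonneg (convex_Ici 0) hdiffF.continuous.continuousOn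
      (fun x _ => (hdiffF x).differentiableWithinAt)
      (fun x hx => by
        rw [(hd1 x).deriv]
        exact hF'nonneg x (le_of_lt (by simpa using hx)))
  have hF0 : F 0 = 0 := by
    simp only [hF]
    norm_num [hq]
  have hFh : 0 ≤ F h := by
    have := hFmono (Set.self_mem_Ici) (Set.mem_Ici.mpr hh) hh
    rw [hF0] at this
    exact this
  have hlog : Real.log (q h) ≤ r * h + h ^ 2 / 8 := by
    simp only [hF] at hFh; linarith
  calc 1 - r + r * Real.exp h = q h := rfl
    _ = Real.exp (Real.log (q h)) := (Real.exp_log (hqpos h)).symm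
    _ ≤ Real.exp (r * h + h ^ 2 / 8) := Real.exp_le_exp.mpr hlog

lemma integrable_of_bounded {Ω : Type*} [MeasurableSpace Ω] {μ : Measure Ω}
    [IsProbabilityMeasure μ] {f : Ω → ℝ} (hf : Measurable f) (C : ℝ)
    (hC : ∀ ω, |f ω| ≤ C) : Integrable f μ :=
  (integrable_const C).mono' hf.aestronglyMeasurable (ae_of_all _ hC)

/-- Hoeffding's lemma, one-sided, for `[0,H]`-valued random variables. -/
lemma hoeffding_mgf {Ω : Type*} [MeasurableSpace Ω] {μ : Measure Ω}
    [IsProbabilityMeasure μ] {X : Ω → ℝ} (hX : Measurable X) {H : ℝ} (hH : 0 < H)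
    (h0 : ∀ ω, 0 ≤ X ω) (hHb : ∀ ω, X ω ≤ H) {s : ℝ} (hs : 0 ≤ s) :
    ∫ ω, Real.exp (s * X ω) ∂μ ≤ Real.exp (s * (∫ ω, X ω ∂μ) + s ^ 2 * H ^ 2 / 8) := by
  have hXint : Integrable X μ := integrable_of_bounded hX H
    (fun ω => abs_le.mpr ⟨by linarith [h0 ω], hHb ω⟩)
  set m := ∫ ω, X ω ∂μ with hm
  have hm0 : 0 ≤ m := integral_nonneg h0
  have hmH : m ≤ H := by
    calc m ≤ ∫ _ω, H ∂μ := integral_mono hXint (integrable_const H) hHb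
      _ = H := by simp
  set c := Real.exp (s * H) with hc
  -- pointwise convexity bound
  have hpt : ∀ ω, Real.exp (s * X ω) ≤ 1 + X ω * ((c - 1) / H) := by
    intro ω
    have hθ0 : 0 ≤ X ω / H := div_nonneg (h0 ω) hH.le
    have hθ1 : X ω / H ≤ 1 := (div_le_one hH).mpr (hHb ω)
    have hcx := convexOn_exp.2 (Set.mem_univ (0:ℝ)) (Set.mem_univ (s * H))
      (by linarith : (0:ℝ) ≤ 1 - X ω / H) hθ0 (by ring)
    simp only [smul_eq_mul] at hcx
    have e1 : (1 - X ω / H) * 0 + X ω / H * (s * H) = s * X ω := by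
      field_simp
      ring
    rw [e1, Real.exp_zero] at hcx
    have e2 : (1 - X ω / H) * 1 + X ω / H * Real.exp (s * H)
        = 1 + X ω * ((c - 1) / H) := by
      rw [← hc]; field_simp; ring
    rw [e2] at hcx
    exact hcx
  have hint1 : Integrable (fun ω => Real.exp (s * X ω)) μ :=
    integrable_of_bounded (hX.const_mul s).exp (Real.exp (s * H))
      (fun ω => by
        rw [abs_of_nonneg (Real.exp_nonneg _)]
        exact Real.exp_le_exp.mpr (mul_le_mul_of_nonneg_left (hHb ω) hs))
  have hint2 : Integrable (fun ω => 1 + X ω * ((c - 1) / H)) μ :=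
    (integrable_const 1).add (hXint.mul_const _)
  have step1 : ∫ ω, Real.exp (s * X ω) ∂μ ≤ 1 - m / H + (m / H) * c := by
    calc ∫ ω, Real.exp (s * X ω) ∂μ
        ≤ ∫ ω, (1 + X ω * ((c - 1) / H)) ∂μ := integral_mono hint1 hint2 hpt
      _ = 1 + m * ((c - 1) / H) := by
          rw [integral_add (integrable_const 1) (hXint.mul_const _),
            integral_const, integral_mul_const]
          simp [hm]
      _ = 1 - m / H + (m / H) * c := by field_simp; ring
  have hr0 : 0 ≤ m / H := div_nonneg hm0 hH.le
  have hr1 : m / H ≤ 1 := (div_le_one hH).mpr hmH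
  have hsH : 0 ≤ s * H := mul_nonneg hs hH.le
  have step2 : 1 - m / H + (m / H) * c
      ≤ Real.exp ((m / H) * (s * H) + (s * H) ^ 2 / 8) := by
    rw [hc]; exact hoeff_core hr0 hr1 hsH
  have heq : (m / H) * (s * H) + (s * H) ^ 2 / 8 = s * m + s ^ 2 * H ^ 2 / 8 := by
    field_simp
  linarith [step1, step2.trans_eq (by rw [heq])]

set_option maxHeartbeats 1000000 in
/-- **Follow-The-Leader / ERM over a finite policy class: expected regret.**
Let `ξ 1, …, ξ K` be i.i.d. `T`-valued random variables, `Pol` a finite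
nonempty policy class, and `g : Pol × T → [0,H]` measurable. With
`v π = E[g π (ξ 1)]` and empirical values `v̂ π = K⁻¹ ∑ l, g π (ξ l)`, if
`πhat` measurably maximizes `v̂`, then
`E[max_π v π − v πhat] ≤ √(H² log |Pol| / K)`. -/
theorem ftl_policy_class_expected_regret
    {Ω : Type*} [MeasurableSpace Ω] (μ : Measure Ω) [IsProbabilityMeasure μ]
    {T : Type*} [MeasurableSpace T]
    (K : ℕ) (hK : 1 ≤ K)
    (ξ : Fin K → Ω → T)
    (hξmeas : ∀ l, Measurable (ξ l))
    (hindep : iIndepFun ξ μ)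
    (hident : ∀ l, μ.map (ξ l) = μ.map (ξ ⟨0, hK⟩))
    {Pol : Type*} [Fintype Pol] [Nonempty Pol] [MeasurableSpace Pol]
    (H : ℝ) (hH : 0 < H)
    (g : Pol → T → ℝ)
    (hgmeas : Measurable (fun p : Pol × T => g p.1 p.2))
    (hg0 : ∀ p t, 0 ≤ g p t) (hgH : ∀ p t, g p t ≤ H)
    (v : Pol → ℝ) (hv : ∀ p, v p = ∫ ω, g p (ξ ⟨0, hK⟩ ω) ∂μ)
    (πhat : Ω → Pol) (hπhat : Measurable πhat)
    (hmax : ∀ ω,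
      (K : ℝ)⁻¹ * ∑ l, g (πhat ω) (ξ l ω)
        = ⨆ p, (K : ℝ)⁻¹ * ∑ l, g p (ξ l ω)) :
    ∫ ω, ((⨆ p, v p) - v (πhat ω)) ∂μ
      ≤ Real.sqrt (H ^ 2 * Real.log (Fintype.card Pol) / K) := by
  classical
  have hKpos : (0:ℝ) < K := by exact_mod_cast hK
  have hKne : (K:ℝ) ≠ 0 := hKpos.ne'
  have hgp : ∀ p, Measurable (g p) := fun p => hgmeas.comp measurable_prodMk_left
  set vh : Pol → Ω → ℝ := fun p ω => (K:ℝ)⁻¹ * ∑ l, g p (ξ l ω) with hvh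
  have hYmeas : ∀ p l, Measurable (fun ω => g p (ξ l ω)) :=
    fun p l => (hgp p).comp (hξmeas l)
  have hYint : ∀ p l, Integrable (fun ω => g p (ξ l ω)) μ := fun p l =>
    integrable_of_bounded (hYmeas p l) H
      (fun ω => abs_le.mpr ⟨by linarith [hg0 p (ξ l ω)], hgH p (ξ l ω)⟩)
  have hvhmeas : ∀ p, Measurable (vh p) := fun p =>
    (Finset.univ.measurable_sum (fun l _ => hYmeas p l)).const_mul _
  have hvh0 : ∀ p ω, 0 ≤ vh p ω := fun p ω =>
    mul_nonneg (by positivity) (Finset.sum_nonneg fun l _ => hg0 p (ξ l ω))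
  have hvhH : ∀ p ω, vh p ω ≤ H := by
    intro p ω
    have h1 : ∑ l : Fin K, g p (ξ l ω) ≤ ∑ _l : Fin K, H :=
      Finset.sum_le_sum fun l _ => hgH p (ξ l ω)
    have h2 : ∑ _l : Fin K, (H:ℝ) = K * H := by
      simp [Finset.sum_const, Finset.card_univ, mul_comm]
    calc vh p ω ≤ (K:ℝ)⁻¹ * (K * H) := by
          refine mul_le_mul_of_nonneg_left ?_ (by positivity)
          rw [← h2]; exact h1
      _ = H := by field_simp
  have hvhint : ∀ p, Integrable (vh p) μ := fun p =>
    integrable_of_bounded (hvhmeas p) H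
      (fun ω => abs_le.mpr ⟨by linarith [hvh0 p ω], hvhH p ω⟩)
  -- unbiasedness
  have hIl : ∀ p l, ∫ ω, g p (ξ l ω) ∂μ = v p := by
    intro p l
    rw [hv p,
      ← integral_map (hξmeas l).aemeasurable (hgp p).aestronglyMeasurable,
      hident l,
      integral_map (hξmeas ⟨0, hK⟩).aemeasurable (hgp p).aestronglyMeasurable]
  have hvhint_eq : ∀ p, ∫ ω, vh p ω ∂μ = v p := by
    intro p
    simp only [hvh]
    rw [integral_const_mul, integral_finset_sum _ (fun l _ => hYint p l)]
    simp only [hIl p]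
    rw [Finset.sum_const, Finset.card_univ, Fintype.card_fin, nsmul_eq_mul]
    field_simp
  have hv0 : ∀ p, 0 ≤ v p := fun p => by
    rw [← hvhint_eq p]; exact integral_nonneg (hvh0 p)
  have hvH : ∀ p, v p ≤ H := fun p => by
    rw [← hvhint_eq p]
    calc ∫ ω, vh p ω ∂μ ≤ ∫ _ω, H ∂μ :=
          integral_mono (hvhint p) (integrable_const H) (hvhH p)
      _ = H := by simp
  -- measurability of v ∘ πhat
  have hvmeas : Measurable v := by
    have hveq : v = fun p => ∫ ω, g p (ξ ⟨0, hK⟩ ω) ∂μ := funext hv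
    rw [hveq]
    have hG : StronglyMeasurable (fun q : Pol × Ω => g q.1 (ξ ⟨0, hK⟩ q.2)) :=
      (hgmeas.comp (measurable_fst.prodMk
        ((hξmeas _).comp measurable_snd))).stronglyMeasurable
    exact hG.integral_prod_right'.measurable
  obtain ⟨pstar, hpstar⟩ := exists_eq_ciSup_of_finite (f := v)
  -- trivial subsingleton case
  rcases subsingleton_or_nontrivial Pol with hsub | hnt
  · have h0 : ∀ ω, (⨆ p, v p) - v (πhat ω) = 0 := by
      intro ω
      have : (⨆ p, v p) = v (πhat ω) := by
        rw [← hpstar, Subsingleton.elim pstar (πhat ω)]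
      rw [this, sub_self]
    simp only [h0, integral_zero]
    exact Real.sqrt_nonneg _
  -- main case
  have hN1 : 1 < Fintype.card Pol := Fintype.one_lt_card
  set N : ℝ := (Fintype.card Pol : ℝ) with hNdef
  have hNgt : (1:ℝ) < N := by rw [hNdef]; exact_mod_cast hN1
  set L : ℝ := Real.log N with hLdef
  have hL : 0 < L := Real.log_pos hNgt
  set t : ℝ := Real.sqrt (8 * K * L) / H with htdef
  have hspos : 0 < Real.sqrt (8 * K * L) := Real.sqrt_pos.mpr (by positivity)
  have htpos : 0 < t := div_pos hspos hH
  -- MGF bound for each policy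
  have hmgf : ∀ p, ∫ ω, Real.exp (t * (vh p ω - v p)) ∂μ
      ≤ Real.exp (t ^ 2 * H ^ 2 / (8 * K)) := by
    intro p
    set Y : Fin K → Ω → ℝ := fun l ω => g p (ξ l ω) with hYdef
    have hYindep : iIndepFun Y μ :=
      hindep.comp (fun _ => g p) (fun _ => hgp p)
    have hsum : mgf (∑ l, Y l) μ (t / K) = ∏ l, mgf (Y l) μ (t / K) :=
      hYindep.mgf_sum (fun l => hYmeas p l) Finset.univ
    have hone : ∀ l, mgf (Y l) μ (t / K)
        ≤ Real.exp ((t / K) * v p + (t / K) ^ 2 * H ^ 2 / 8) := by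
      intro l
      have hb := hoeffding_mgf (μ := μ) (hYmeas p l) hH
        (fun ω => hg0 p (ξ l ω)) (fun ω => hgH p (ξ l ω))
        (s := t / K) (div_nonneg htpos.le hKpos.le)
      rw [hIl p l] at hb
      exact hb
    have hstep : (fun ω => Real.exp (t * (vh p ω - v p)))
        = fun ω => Real.exp (-(t * v p)) * Real.exp ((t / K) * (∑ l, Y l) ω) := by
      funext ω
      rw [← Real.exp_add]
      congr 1
      simp only [hvh, hYdef, Finset.sum_apply]
      field_simp
      ring
    calc ∫ ω, Real.exp (t * (vh p ω - v p)) ∂μ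
        = Real.exp (-(t * v p)) * mgf (∑ l, Y l) μ (t / K) := by
          rw [hstep, integral_const_mul]; rfl
      _ = Real.exp (-(t * v p)) * ∏ l, mgf (Y l) μ (t / K) := by rw [hsum]
      _ ≤ Real.exp (-(t * v p))
            * ∏ _l : Fin K, Real.exp ((t / K) * v p + (t / K) ^ 2 * H ^ 2 / 8) := by
          refine mul_le_mul_of_nonneg_left ?_ (Real.exp_nonneg _)
          exact Finset.prod_le_prod (fun l _ => mgf_nonneg) (fun l _ => hone l)
      _ = Real.exp (t ^ 2 * H ^ 2 / (8 * K)) := by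
          rw [Finset.prod_const, Finset.card_univ, Fintype.card_fin,
            ← Real.exp_nat_mul, ← Real.exp_add]
          congr 1
          field_simp
          ring
  -- the sum of exponentials
  set W : Ω → ℝ := fun ω => ∑ p, Real.exp (t * (vh p ω - v p)) with hWdef
  have hWmeas : Measurable W :=
    Finset.univ.measurable_sum (fun p _ =>
      (((hvhmeas p).sub_const (v p)).const_mul t).exp)
  have hWpos : ∀ ω, 0 < W ω :=
    fun ω => Finset.sum_pos (fun p _ => Real.exp_pos _) Finset.univ_nonempty
  have hterm_bdd : ∀ p ω, Real.exp (t * (vh p ω - v p)) ≤ Real.exp (t * H) := by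
    intro p ω
    refine Real.exp_le_exp.mpr (mul_le_mul_of_nonneg_left ?_ htpos.le)
    have := hvhH p ω; have := hv0 p; linarith
  have hWub : ∀ ω, W ω ≤ N * Real.exp (t * H) := by
    intro ω
    calc W ω ≤ ∑ _p : Pol, Real.exp (t * H) :=
          Finset.sum_le_sum (fun p _ => hterm_bdd p ω)
      _ = N * Real.exp (t * H) := by
          rw [Finset.sum_const, Finset.card_univ, nsmul_eq_mul, hNdef]
  have hWlb : ∀ ω, Real.exp (-(t * H)) ≤ W ω := by
    intro ω
    have h1 : Real.exp (-(t * H)) ≤ Real.exp (t * (vh pstar ω - v pstar)) := by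
      refine Real.exp_le_exp.mpr ?_
      have h2 : -H ≤ vh pstar ω - v pstar := by
        have := hvh0 pstar ω; have := hvH pstar; linarith
      have h3 := mul_le_mul_of_nonneg_left h2 htpos.le
      linarith
    refine h1.trans (Finset.single_le_sum
      (f := fun q => Real.exp (t * (vh q ω - v q)))
      (fun q _ => (Real.exp_pos _).le) (Finset.mem_univ pstar))
  have hWint : Integrable W μ :=
    integrable_of_bounded hWmeas (N * Real.exp (t * H))
      (fun ω => abs_le.mpr ⟨by
        have := hWlb ω
        have h0 : (0:ℝ) < Real.exp (-(t*H)) := Real.exp_pos _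
        nlinarith [hWub ω, hWpos ω, Real.exp_pos (t*H), hNgt], hWub ω⟩)
  set c : ℝ := N * Real.exp (t ^ 2 * H ^ 2 / (8 * K)) with hcdef
  have hcpos : 0 < c := by rw [hcdef]; positivity
  have hintW : ∫ ω, W ω ∂μ ≤ c := by
    rw [hWdef]
    simp only
    rw [integral_finset_sum _ (fun p _ =>
      integrable_of_bounded (((hvhmeas p).sub_const (v p)).const_mul t).exp
        (Real.exp (t * H)) (fun ω => by
          rw [abs_of_nonneg (Real.exp_nonneg _)]; exact hterm_bdd p ω))]
    calc ∑ p, ∫ ω, Real.exp (t * (vh p ω - v p)) ∂μ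
        ≤ ∑ _p : Pol, Real.exp (t ^ 2 * H ^ 2 / (8 * K)) :=
          Finset.sum_le_sum (fun p _ => hmgf p)
      _ = c := by
          rw [Finset.sum_const, Finset.card_univ, nsmul_eq_mul, hcdef, hNdef]
  -- pointwise: sup of deviations ≤ t⁻¹ log W
  have hsup_le : ∀ ω, (⨆ p, (vh p ω - v p)) ≤ t⁻¹ * Real.log (W ω) := by
    intro ω
    refine ciSup_le fun p => ?_
    have h1 : Real.exp (t * (vh p ω - v p)) ≤ W ω :=
      Finset.single_le_sum (f := fun q => Real.exp (t * (vh q ω - v q)))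
        (fun q _ => (Real.exp_pos _).le) (Finset.mem_univ p)
    have h2 : t * (vh p ω - v p) ≤ Real.log (W ω) :=
      (Real.le_log_iff_exp_le (hWpos ω)).mpr h1
    calc vh p ω - v p = t⁻¹ * (t * (vh p ω - v p)) := by field_simp
      _ ≤ t⁻¹ * Real.log (W ω) :=
          mul_le_mul_of_nonneg_left h2 (inv_nonneg.mpr htpos.le)
  -- bounds on log W
  have hClog : ∀ ω, |Real.log (W ω)| ≤ Real.log (N * Real.exp (t * H)) + t * H := by
    intro ω
    have hub : Real.log (W ω) ≤ Real.log (N * Real.exp (t * H)) :=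
      Real.log_le_log (hWpos ω) (hWub ω)
    have hlb : -(t * H) ≤ Real.log (W ω) := by
      calc -(t * H) = Real.log (Real.exp (-(t * H))) := (Real.log_exp _).symm
        _ ≤ Real.log (W ω) := Real.log_le_log (Real.exp_pos _) (hWlb ω)
    have hXnn : 0 ≤ Real.log (N * Real.exp (t * H)) := by
      refine Real.log_nonneg ?_
      have : (1:ℝ) ≤ Real.exp (t * H) := Real.one_le_exp (by positivity)
      nlinarith [hNgt]
    have htH : 0 ≤ t * H := by positivity
    exact abs_le.mpr ⟨by linarith, by linarith⟩
  have hlogWmeas : Measurable (fun ω => Real.log (W ω)) := Real.measurable_log.comp hWmeas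
  have hlogWint : Integrable (fun ω => Real.log (W ω)) μ :=
    integrable_of_bounded hlogWmeas _ hClog
  -- E[sup deviation] ≤ t⁻¹ log c
  have hsupmeas : Measurable (fun ω => ⨆ p, (vh p ω - v p)) :=
    Measurable.iSup (fun p => (hvhmeas p).sub_const (v p))
  have hsup_bdd : ∀ ω, |⨆ p, (vh p ω - v p)| ≤ H := by
    intro ω
    refine abs_le.mpr ⟨?_, ?_⟩
    · have h1 : vh pstar ω - v pstar ≤ ⨆ p, (vh p ω - v p) :=
        le_ciSup (f := fun p => vh p ω - v p)
          (Set.Finite.bddAbove (Set.finite_range _)) pstar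
      have := hvh0 pstar ω; have := hvH pstar; linarith
    · refine ciSup_le fun p => ?_
      have := hvhH p ω; have := hv0 p; linarith
  have hsupint : Integrable (fun ω => ⨆ p, (vh p ω - v p)) μ :=
    integrable_of_bounded hsupmeas H hsup_bdd
  have hEsup : ∫ ω, (⨆ p, (vh p ω - v p)) ∂μ ≤ t⁻¹ * Real.log c := by
    have hdivint : Integrable (fun ω => W ω / c) μ := hWint.div_const c
    have hlogW_le : ∀ ω, Real.log (W ω) ≤ W ω / c + (Real.log c - 1) := by
      intro ω
      have h1 : Real.log (W ω / c) ≤ W ω / c - 1 :=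
        Real.log_le_sub_one_of_pos (div_pos (hWpos ω) hcpos)
      rw [Real.log_div (hWpos ω).ne' hcpos.ne'] at h1
      linarith
    have hIlogW : ∫ ω, Real.log (W ω) ∂μ ≤ Real.log c := by
      calc ∫ ω, Real.log (W ω) ∂μ
          ≤ ∫ ω, (W ω / c + (Real.log c - 1)) ∂μ := by
            refine integral_mono hlogWint ?_ hlogW_le
            exact hdivint.add (integrable_const _)
        _ = (∫ ω, W ω ∂μ) / c + (Real.log c - 1) := by
            rw [integral_add hdivint (integrable_const _),
              integral_div, integral_const]
            simp
        _ ≤ 1 + (Real.log c - 1) := by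
            have : (∫ ω, W ω ∂μ) / c ≤ 1 := by
              rw [div_le_one hcpos]; exact hintW
            linarith
        _ = Real.log c := by ring
    calc ∫ ω, (⨆ p, (vh p ω - v p)) ∂μ
        ≤ ∫ ω, t⁻¹ * Real.log (W ω) ∂μ :=
          integral_mono hsupint (hlogWint.const_mul _)
            (fun ω => hsup_le ω)
      _ = t⁻¹ * ∫ ω, Real.log (W ω) ∂μ := integral_const_mul _ _
      _ ≤ t⁻¹ * Real.log c :=
          mul_le_mul_of_nonneg_left hIlogW (inv_nonneg.mpr htpos.le)
  -- decomposition
  have hkey : ∀ ω, (⨆ p, v p) - v (πhat ω)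
      ≤ (v pstar - vh pstar ω) + ⨆ p, (vh p ω - v p) := by
    intro ω
    have hmax' : vh (πhat ω) ω = ⨆ p, vh p ω := hmax ω
    have h1 : vh pstar ω ≤ vh (πhat ω) ω := by
      rw [hmax']
      exact le_ciSup (f := fun p => vh p ω)
        (Set.Finite.bddAbove (Set.finite_range _)) pstar
    have h2 : vh (πhat ω) ω - v (πhat ω) ≤ ⨆ p, (vh p ω - v p) :=
      le_ciSup (f := fun p => vh p ω - v p)
        (Set.Finite.bddAbove (Set.finite_range _)) (πhat ω)
    have h3 : (⨆ p, v p) = v pstar := hpstar.symm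
    linarith
  have hvπint : Integrable (fun ω => v (πhat ω)) μ :=
    integrable_of_bounded (hvmeas.comp hπhat) H
      (fun ω => abs_le.mpr ⟨by linarith [hv0 (πhat ω)], hvH (πhat ω)⟩)
  have hLHSint : Integrable (fun ω => (⨆ p, v p) - v (πhat ω)) μ :=
    (integrable_const _).sub hvπint
  have hf1 : Integrable (fun ω => v pstar - vh pstar ω) μ :=
    (integrable_const _).sub (hvhint pstar)
  have hRHSint : Integrable
      (fun ω => (v pstar - vh pstar ω) + ⨆ p, (vh p ω - v p)) μ :=
    hf1.add hsupint
  have hmain : ∫ ω, ((⨆ p, v p) - v (πhat ω)) ∂μ ≤ t⁻¹ * Real.log c := by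
    calc ∫ ω, ((⨆ p, v p) - v (πhat ω)) ∂μ
        ≤ ∫ ω, ((v pstar - vh pstar ω) + ⨆ p, (vh p ω - v p)) ∂μ :=
          integral_mono hLHSint hRHSint hkey
      _ = (v pstar - ∫ ω, vh pstar ω ∂μ) + ∫ ω, (⨆ p, (vh p ω - v p)) ∂μ := by
          have e1 : ∫ ω, (v pstar - vh pstar ω) ∂μ
              = v pstar - ∫ ω, vh pstar ω ∂μ := by
            rw [integral_sub (integrable_const _) (hvhint pstar), integral_const]
            simp
          rw [integral_add hf1 hsupint, e1]
      _ = ∫ ω, (⨆ p, (vh p ω - v p)) ∂μ := by rw [hvhint_eq pstar]; ring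
      _ ≤ t⁻¹ * Real.log c := hEsup
  -- final arithmetic
  refine hmain.trans ?_
  have hsq : Real.sqrt (8 * K * L) ^ 2 = 8 * K * L := Real.sq_sqrt (by positivity)
  set s : ℝ := Real.sqrt (8 * K * L) with hsdef
  have hlogc : Real.log c = L + t ^ 2 * H ^ 2 / (8 * K) := by
    rw [hcdef, Real.log_mul (by positivity) (Real.exp_ne_zero _), Real.log_exp, hLdef]
  have hLs : L = s ^ 2 / (8 * K) := by
    rw [eq_div_iff (by positivity : (8:ℝ) * K ≠ 0)] at *
    linarith [hsq]
  have hkey2 : t⁻¹ * Real.log c = H * s / (4 * K) := by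
    rw [hlogc, htdef, hLs]
    field_simp
    ring
  rw [hkey2, hLdef]
  rw [show H ^ 2 * Real.log N / K = H ^ 2 * L / K by rw [hLdef]]
  have h4K : (0:ℝ) < 4 * K := by positivity
  rw [Real.le_sqrt (by positivity)
    (div_nonneg (mul_nonneg (sq_nonneg H) hL.le) hKpos.le)]
  rw [div_pow, mul_pow, hsq]
  rw [div_le_div_iff₀ (by positivity) hKpos]
  have hHL : 0 ≤ H ^ 2 * L := mul_nonneg (sq_nonneg H) hL.le
  nlinarith [mul_nonneg hHL (mul_pos hKpos hKpos).le]
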